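/- Let Γ be a cancellation monoid with neutral element e, D a Γ-graded division ring, and E a nonzero Γ-graded D-module. Then every linearly independent subset of E consisting of homogeneous elements is contained in a maximal such subset, and every maximal linearly independent homogeneous subset S of E is a free D-basis of E; in particular, E is a free D-module admitting a basis consisting of homogeneous elements. -/

import Mathlib

section

variable {Γ : Type*} [AddCancelMonoid Γ] [DecidableEq Γ]
variable {D : Type*} [Ring D] (𝒟 : Γ → AddSubgroup D) [GradedRing 𝒟]
variable {E : Type*} [AddCommGroup E] [Module D E]
variable (ℰ : Γ → AddSubgroup E) [SetLike.GradedSMul 𝒟 ℰ] [DirectSum.Decomposition ℰ]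

/-- A subset of the `Γ`-graded module `E` is a linearly independent homogeneous subset if
it consists of (nonzero) homogeneous elements and is linearly independent over `D`. -/
def IsLinIndepHomogeneous (S : Set E) : Prop :=
  (∀ x ∈ S, x ≠ 0 ∧ ∃ γ : Γ, x ∈ ℰ γ) ∧ LinearIndependent D ((↑) : S → E)

open DirectSum

include 𝒟 in
/-- Homogeneous components of elements of the span of a homogeneous set stay in the span. -/
lemma aux_span_homog_closed {S : Set E} (hS : ∀ x ∈ S, ∃ γ : Γ, x ∈ ℰ γ)
    {w : E} (hw : w ∈ Submodule.span D S) (μ : Γ) :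
    ((decompose ℰ w μ : ℰ μ) : E) ∈ Submodule.span D S := by
  classical
  revert μ
  induction hw using Submodule.span_induction with
  | mem s hs =>
      intro μ
      obtain ⟨γ, hγ⟩ := hS s hs
      by_cases h : γ = μ
      · subst h; rw [decompose_of_mem_same ℰ hγ]; exact Submodule.subset_span hs
      · rw [decompose_of_mem_ne ℰ hγ h]; exact Submodule.zero_mem _
  | zero => intro μ; rw [decompose_zero]; simp
  | add x y _ _ hx hy =>
      intro μ; rw [decompose_add, DirectSum.add_apply]
      exact Submodule.add_mem _ (hx μ) (hy μ)
  | smul a w hw ih =>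
      intro μ
      have ha : a • w = ∑ δ ∈ (decompose 𝒟 a).support, ((decompose 𝒟 a δ : 𝒟 δ) : D) • w := by
        rw [← Finset.sum_smul, DirectSum.sum_support_decompose 𝒟 a]
      rw [ha, decompose_sum, DFinsupp.finset_sum_apply, AddSubmonoidClass.coe_finset_sum]
      refine Submodule.sum_mem _ fun δ _ => ?_
      have hw' : ((decompose 𝒟 a δ : 𝒟 δ) : D) • w
          = ∑ ν ∈ (decompose ℰ w).support,
              ((decompose 𝒟 a δ : 𝒟 δ) : D) • ((decompose ℰ w ν : ℰ ν) : E) := by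
        rw [← Finset.smul_sum, DirectSum.sum_support_decompose ℰ w]
      rw [hw', decompose_sum, DFinsupp.finset_sum_apply, AddSubmonoidClass.coe_finset_sum]
      refine Submodule.sum_mem _ fun ν _ => ?_
      have hmem : ((decompose 𝒟 a δ : 𝒟 δ) : D) • ((decompose ℰ w ν : ℰ ν) : E) ∈ ℰ (δ + ν) :=
        SetLike.GradedSMul.smul_mem (decompose 𝒟 a δ).2 (decompose ℰ w ν).2
      have hspan : ((decompose 𝒟 a δ : 𝒟 δ) : D) • ((decompose ℰ w ν : ℰ ν) : E)
          ∈ Submodule.span D S := Submodule.smul_mem _ _ (ih ν)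
      by_cases h : δ + ν = μ
      · rw [decompose_of_mem_same ℰ (h ▸ hmem)]; exact hspan
      · rw [decompose_of_mem_ne ℰ hmem h]; exact Submodule.zero_mem _

include 𝒟 in
/-- If `x` is homogeneous and not in the span of the homogeneous set `S`, then no nonzero
scalar multiple of `x` lies in the span of `S`. -/
lemma aux_smul_eq_zero_of_notmem_span
    (hdiv : ∀ (γ : Γ) (a : D), a ∈ 𝒟 γ → a ≠ 0 → IsUnit a)
    {S : Set E} (hS : ∀ x ∈ S, ∃ γ : Γ, x ∈ ℰ γ)
    {x : E} {γ : Γ} (hγ : x ∈ ℰ γ) (hx : x ∉ Submodule.span D S)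
    {a : D} (hax : a • x ∈ Submodule.span D S) : a = 0 := by
  classical
  by_contra ha
  obtain ⟨δ, hδ⟩ : ∃ δ, ((decompose 𝒟 a δ : 𝒟 δ) : D) ≠ 0 := by
    by_contra h
    push_neg at h
    apply ha
    rw [← DirectSum.sum_support_decompose 𝒟 a]
    exact Finset.sum_eq_zero fun δ _ => h δ
  have hδsupp : δ ∈ (decompose 𝒟 a).support := by
    rw [DFinsupp.mem_support_iff]
    exact fun h => hδ (by rw [h]; rfl)
  have key : ((decompose ℰ (a • x) (δ + γ) : ℰ (δ + γ)) : E)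
      = ((decompose 𝒟 a δ : 𝒟 δ) : D) • x := by
    have ha' : a • x = ∑ δ' ∈ (decompose 𝒟 a).support, ((decompose 𝒟 a δ' : 𝒟 δ') : D) • x := by
      rw [← Finset.sum_smul, DirectSum.sum_support_decompose 𝒟 a]
    rw [ha', decompose_sum, DFinsupp.finset_sum_apply, AddSubmonoidClass.coe_finset_sum]
    have h1 : ∀ δ' ∈ (decompose 𝒟 a).support, δ' ≠ δ →
        ((decompose ℰ (((decompose 𝒟 a δ' : 𝒟 δ') : D) • x) (δ + γ) : ℰ (δ + γ)) : E) = 0 := by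
      intro δ' _ hne
      have hmem : ((decompose 𝒟 a δ' : 𝒟 δ') : D) • x ∈ ℰ (δ' + γ) :=
        SetLike.GradedSMul.smul_mem (decompose 𝒟 a δ').2 hγ
      exact decompose_of_mem_ne ℰ hmem fun h => hne (add_right_cancel h)
    rw [Finset.sum_eq_single_of_mem δ hδsupp h1]
    exact decompose_of_mem_same ℰ (SetLike.GradedSMul.smul_mem (decompose 𝒟 a δ).2 hγ)
  have hmemspan : ((decompose 𝒟 a δ : 𝒟 δ) : D) • x ∈ Submodule.span D S := by
    rw [← key]; exact aux_span_homog_closed 𝒟 ℰ hS hax (δ + γ)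
  obtain ⟨b, hb⟩ : ∃ b, b * ((decompose 𝒟 a δ : 𝒟 δ) : D) = 1 := by
    obtain ⟨u, hu⟩ := hdiv δ _ (decompose 𝒟 a δ).2 hδ
    exact ⟨(u⁻¹ : Dˣ), by rw [← hu]; exact u.inv_mul⟩
  apply hx
  have : x = b • (((decompose 𝒟 a δ : 𝒟 δ) : D) • x) := by
    rw [smul_smul, hb, one_smul]
  rw [this]
  exact Submodule.smul_mem _ _ hmemspan

include 𝒟 in
/-- Inserting a homogeneous element outside the span of a linearly independent homogeneous
set keeps it linearly independent homogeneous. -/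
lemma aux_isLinIndepHomogeneous_insert
    (hdiv : ∀ (γ : Γ) (a : D), a ∈ 𝒟 γ → a ≠ 0 → IsUnit a)
    {S : Set E} (hS : IsLinIndepHomogeneous (D := D) ℰ S)
    {x : E} {γ : Γ} (hγ : x ∈ ℰ γ) (hx : x ∉ Submodule.span D S) :
    IsLinIndepHomogeneous (D := D) ℰ (insert x S) := by
  classical
  have hx0 : x ≠ 0 := fun h => hx (h ▸ Submodule.zero_mem _)
  constructor
  · rintro y (rfl | hy)
    · exact ⟨hx0, γ, hγ⟩
    · exact hS.1 y hy
  · rw [linearIndependent_subtype_iff, linearIndepOn_iff]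
    intro l hl hl0
    have hdecomp : l = Finsupp.single x (l x) + l.erase x := (Finsupp.single_add_erase x l).symm
    have herase_supp : l.erase x ∈ Finsupp.supported D D S := by
      intro y hy
      rw [Finsupp.support_erase, Finset.mem_coe, Finset.mem_erase] at hy
      rcases hl hy.2 with rfl | h
      · exact absurd rfl hy.1
      · exact h
    have herase_span : Finsupp.linearCombination D id (l.erase x) ∈ Submodule.span D S := by
      rw [Finsupp.linearCombination_apply]
      refine Submodule.sum_mem _ fun y hy => ?_
      exact Submodule.smul_mem _ _ (Submodule.subset_span (herase_supp hy))
    have hsum : (l x) • x + Finsupp.linearCombination D id (l.erase x) = 0 := by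
      have := hl0
      rw [hdecomp, map_add, Finsupp.linearCombination_single] at this
      simpa using this
    have hmem : (l x) • x ∈ Submodule.span D S := by
      have : (l x) • x = -Finsupp.linearCombination D id (l.erase x) := by
        linear_combination (norm := abel) hsum
      rw [this]
      exact Submodule.neg_mem _ herase_span
    have hlx : l x = 0 :=
      aux_smul_eq_zero_of_notmem_span 𝒟 ℰ hdiv (fun y hy => (hS.1 y hy).2) hγ hx hmem
    have hl_eq : l = l.erase x := by
      rw [hdecomp, hlx, Finsupp.single_zero, zero_add]
      rw [hdecomp] at hlx ⊢
      simp
    have : Finsupp.linearCombination D id l = 0 := hl0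
    rw [hl_eq] at this ⊢
    exact (linearIndependent_subtype_iff.trans linearIndepOn_iff).1 hS.2 _ herase_supp this

include 𝒟 in
/-- A maximal linearly independent homogeneous set spans `E`. -/
lemma aux_maximal_spans
    (hdiv : ∀ (γ : Γ) (a : D), a ∈ 𝒟 γ → a ≠ 0 → IsUnit a)
    {S : Set E} (hS : IsLinIndepHomogeneous (D := D) ℰ S)
    (hmax : ∀ S' : Set E, IsLinIndepHomogeneous (D := D) ℰ S' → S ⊆ S' → S' = S) :
    Submodule.span D S = ⊤ := by
  classical
  have hhomog : ∀ (μ : Γ) (y : E), y ∈ ℰ μ → y ∈ Submodule.span D S := by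
    intro μ y hy
    by_contra hns
    have hins := aux_isLinIndepHomogeneous_insert 𝒟 ℰ hdiv hS hy hns
    have := hmax _ hins (Set.subset_insert y S)
    apply hns
    exact Submodule.subset_span (this ▸ Set.mem_insert y S)
  rw [eq_top_iff]
  intro w _
  rw [← DirectSum.sum_support_decompose ℰ w]
  exact Submodule.sum_mem _ fun μ _ => hhomog μ _ (decompose ℰ w μ).2

/-- **Proposition 4.1(i)–(ii).**  Let `Γ` be a cancellation monoid (written additively),
`D` a `Γ`-graded division ring (every nonzero homogeneous element is invertible) and `E`
a nonzero `Γ`-graded `D`-module.  Then every linearly independent homogeneous subset of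
`E` is contained in a maximal one, every maximal linearly independent homogeneous subset
of `E` is a free `D`-basis of `E`, and in particular `E` is a free `D`-module with a
homogeneous basis. -/
theorem maximal_linIndep_homogeneous_is_basis
    [Nontrivial E]
    (hdiv : ∀ (γ : Γ) (a : D), a ∈ 𝒟 γ → a ≠ 0 → IsUnit a) :
    (∀ V : Set E, IsLinIndepHomogeneous (D := D) ℰ V →
        ∃ S : Set E, V ⊆ S ∧ IsLinIndepHomogeneous (D := D) ℰ S ∧
          ∀ S' : Set E, IsLinIndepHomogeneous (D := D) ℰ S' → S ⊆ S' → S' = S) ∧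
    (∀ S : Set E, IsLinIndepHomogeneous (D := D) ℰ S →
        (∀ S' : Set E, IsLinIndepHomogeneous (D := D) ℰ S' → S ⊆ S' → S' = S) →
        LinearIndependent D ((↑) : S → E) ∧ Submodule.span D S = ⊤) ∧
    (∃ S : Set E, (∀ x ∈ S, x ≠ 0 ∧ ∃ γ : Γ, x ∈ ℰ γ) ∧
        LinearIndependent D ((↑) : S → E) ∧ Submodule.span D S = ⊤) := by
  classical
  have hzorn : ∀ V : Set E, IsLinIndepHomogeneous (D := D) ℰ V →
      ∃ S : Set E, V ⊆ S ∧ IsLinIndepHomogeneous (D := D) ℰ S ∧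
        ∀ S' : Set E, IsLinIndepHomogeneous (D := D) ℰ S' → S ⊆ S' → S' = S := by
    intro V hV
    have hchain : ∀ c ⊆ {S : Set E | IsLinIndepHomogeneous (D := D) ℰ S},
        IsChain (· ⊆ ·) c → c.Nonempty →
        ∃ ub ∈ {S : Set E | IsLinIndepHomogeneous (D := D) ℰ S}, ∀ s ∈ c, s ⊆ ub := by
      intro c hcsub hchain _
      refine ⟨⋃₀ c, ⟨?_, ?_⟩, fun s hs => Set.subset_sUnion_of_mem hs⟩
      · rintro x ⟨s, hs, hxs⟩
        exact (hcsub hs).1 x hxs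
      · exact linearIndepOn_sUnion_of_directed (v := id) hchain.directedOn
          fun a ha => (hcsub ha).2
    obtain ⟨m, hVm, hmax⟩ := zorn_subset_nonempty
      {S : Set E | IsLinIndepHomogeneous (D := D) ℰ S} hchain V hV
    exact ⟨m, hVm, hmax.1, fun S' hS' hsub => subset_antisymm (hmax.2 hS' hsub) hsub⟩
  have hmaxbasis : ∀ S : Set E, IsLinIndepHomogeneous (D := D) ℰ S →
      (∀ S' : Set E, IsLinIndepHomogeneous (D := D) ℰ S' → S ⊆ S' → S' = S) →
      LinearIndependent D ((↑) : S → E) ∧ Submodule.span D S = ⊤ :=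
    fun S hS hmax => ⟨hS.2, aux_maximal_spans 𝒟 ℰ hdiv hS hmax⟩
  refine ⟨hzorn, hmaxbasis, ?_⟩
  have hempty : IsLinIndepHomogeneous (D := D) ℰ (∅ : Set E) :=
    ⟨fun x hx => absurd hx (Set.notMem_empty x), linearIndependent_empty D E⟩
  obtain ⟨S, _, hS, hmax⟩ := hzorn ∅ hempty
  obtain ⟨hli, hspan⟩ := hmaxbasis S hS hmax
  exact ⟨S, hS.1, hli, hspan⟩

end
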